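/- Let $m = 2$ and $\boldsymbol\pi = \boldsymbol\pi_{\lambda,a}\boldsymbol\pi_{\mu,-a} \in \mathcal{P}$ with $\lambda, \mu \in P^+$. Then $\mathbf{r}^{-1}(\mathbf{r}(\boldsymbol\pi)) = \{ \boldsymbol\pi_{\lambda + \eta, a}\,\boldsymbol\pi_{\mu - \sigma(\eta), -a} : \eta \in (P^+ - \lambda) \cap (P^- + \sigma(\mu)) \}$. -/

import Mathlib

open Polynomial

noncomputable section

variable {I I₀ : Type*}

/-- The weight of 𝛑 ∈ 𝒫 at the spectral parameter `a`. -/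
def wtAt (f : I → Polynomial ℂ) (a : ℂ) : I → ℕ := fun i => (f i).rootMultiplicity a⁻¹

/-- 𝛑_{λ,a} = ((1 - a u)^{λ(hᵢ)})ᵢ ∈ 𝒫, for a dominant weight λ. -/
def piLam (lam : I → ℕ) (a : ℂ) : I → Polynomial ℂ := fun i => (1 - C a * X) ^ lam i

/-- 𝛑_{λ,a} for a weight λ given in integer coordinates (dominance is imposed as a
hypothesis where relevant). -/
def piLamZ (v : I → ℤ) (a : ℂ) : I → Polynomial ℂ := fun i => (1 - C a * X) ^ (v i).toNat

/-- The action of the diagram automorphism σ on weights, σ(Σ nᵢ ωᵢ) = Σ nᵢ ω_{σ(i)},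
i.e. (σ·v)(j) = v(σ⁻¹ j). -/
def sw (σ : Equiv.Perm I) (v : I → ℤ) : I → ℤ := fun i => v (σ.symm i)

/-- The embedding P⁺_σ ⊆ P⁺: a dominant weight of 𝔤₀, given by its coordinates on
the orbit representatives ι : I₀ → I, regarded as a dominant weight of 𝔤 (zero on
the remaining nodes). -/
def embwt (ι : I₀ → I) (lam : I₀ → ℕ) : I → ℤ :=
  Function.extend ι (fun j => (lam j : ℤ)) (fun _ => 0)

open scoped Classical in
/-- The folded components λ(ε) ∈ P⁺_σ of a dominant weight λ ∈ P⁺. -/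
def lamComp (σ : Equiv.Perm I) (ι : I₀ → I) (lam : I → ℕ) (ε : ℕ) : I₀ → ℕ :=
  fun j => if ε ≠ 0 ∧ σ (ι j) = ι j then 0 else lam ((σ ^ ε) (ι j))

open scoped Classical in
/-- The folding map 𝐫 : 𝒫 → 𝒫^σ, 𝐫(∏ₖ 𝛑_{λₖ,aₖ}) = ∏ₖ∏_ε 𝛑^σ_{λₖ(ε), ζ^ε aₖ}; at a
node fixed by σ the spectral parameter is raised to the m-th power. -/
def fold [Fintype I] (m : ℕ) (ζ : ℂ) (σ : Equiv.Perm I) (ι : I₀ → I)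
    (f : I → Polynomial ℂ) : I₀ → Polynomial ℂ :=
  fun j =>
    ∏ a ∈ ((∏ i, f i).roots.toFinset.image fun r => r⁻¹),
      ∏ ε ∈ Finset.range m,
        (1 - C ((ζ ^ ε * a) ^ (if σ (ι j) = ι j then m else 1)) * X) ^
          lamComp σ ι (wtAt f a) ε j

open scoped Classical in
/-- 𝛑^σ_{κ,b} ∈ 𝒫^σ for κ ∈ P⁺_σ: the component at the node j is
(1 - b^{(α_j,α_j)} u)^{κ(j)}, with (α_j,α_j) = m at nodes fixed by σ and 1 on
full orbits. -/
def piSig (m : ℕ) (σ : Equiv.Perm I) (ι : I₀ → I) (κ : I₀ → ℕ) (b : ℂ) :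
    I₀ → Polynomial ℂ :=
  fun j => (1 - C (b ^ (if σ (ι j) = ι j then m else 1)) * X) ^ κ j

/-- The spectral character χ_𝛑 : ℂˣ → P/Q of 𝛑 ∈ 𝒫. -/
def chars (Q : AddSubgroup (I → ℤ)) (f : I → Polynomial ℂ) :
    ℂ → (I → ℤ) ⧸ Q :=
  fun a => QuotientAddGroup.mk (fun i => ((f i).rootMultiplicity a⁻¹ : ℤ))



lemma eval0_lin (β : ℂ) : (1 - C β * X : Polynomial ℂ).eval 0 = 1 := by simp

lemma lin_ne_zero (β : ℂ) : (1 - C β * X : Polynomial ℂ) ≠ 0 := by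
  intro h
  have := eval0_lin β
  rw [h] at this; simp at this

lemma lin_eq (β : ℂ) (hβ : β ≠ 0) :
    (1 - C β * X : Polynomial ℂ) = C (-β) * (X - C β⁻¹) := by
  rw [mul_sub, ← C_mul, neg_mul, mul_inv_cancel₀ hβ]
  simp [map_neg]
  ring

lemma roots_lin (β : ℂ) (hβ : β ≠ 0) : (1 - C β * X : Polynomial ℂ).roots = {β⁻¹} := by
  rw [lin_eq β hβ, roots_C_mul _ (neg_ne_zero.2 hβ), roots_X_sub_C]

lemma rm_lin_pow (β : ℂ) (hβ : β ≠ 0) (k : ℕ) (x : ℂ) :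
    rootMultiplicity x ((1 - C β * X : Polynomial ℂ) ^ k) = if x = β⁻¹ then k else 0 := by
  classical
  rw [← count_roots, roots_pow, roots_lin β hβ]
  simp [Multiset.count_nsmul, Multiset.count_singleton]

lemma rm_prod {α : Type*} (s : Finset α) (h : α → Polynomial ℂ)
    (hh : ∀ t ∈ s, h t ≠ 0) (x : ℂ) :
    rootMultiplicity x (∏ t ∈ s, h t) = ∑ t ∈ s, rootMultiplicity x (h t) := by
  classical
  induction s using Finset.induction with
  | empty => simp [rootMultiplicity_eq_zero (by simp : ¬ IsRoot (1 : Polynomial ℂ) x)]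
  | insert _ _ hnot ih =>
    rename_i b s
    rw [Finset.prod_insert hnot, Finset.sum_insert hnot,
      rootMultiplicity_mul (mul_ne_zero (hh b (Finset.mem_insert_self b s))
        (Finset.prod_ne_zero_iff.2 fun t ht => hh t (Finset.mem_insert_of_mem ht))),
      ih fun t ht => hh t (Finset.mem_insert_of_mem ht)]


lemma prod_form (p : Polynomial ℂ) (hp : p ≠ 0) :
    C p.leadingCoeff * (p.roots.map fun r => X - C r).prod = p :=
  C_leadingCoeff_mul_prod_multiset_X_sub_C
    (splits_iff_card_roots.1 (IsAlgClosed.splits p))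

lemma eq_of_rm (p q : Polynomial ℂ) (hp : p.coeff 0 = 1) (hq : q.coeff 0 = 1)
    (h : ∀ x, rootMultiplicity x p = rootMultiplicity x q) : p = q := by
  classical
  have hp0 : p ≠ 0 := fun h0 => by simp [h0] at hp
  have hq0 : q ≠ 0 := fun h0 => by simp [h0] at hq
  have hroots : p.roots = q.roots := by
    ext x
    rw [count_roots, count_roots, h]
  have hpf := prod_form p hp0
  have hqf := prod_form q hq0
  set M := (p.roots.map fun r => X - C r).prod with hM
  have hqf' : C q.leadingCoeff * M = q := by rw [hM, hroots]; exact hqf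
  have h1 : p.leadingCoeff * M.coeff 0 = 1 := by
    have := congrArg (fun r => Polynomial.coeff r 0) hpf
    simpa [coeff_C_mul] using this.trans hp
  have h2 : q.leadingCoeff * M.coeff 0 = 1 := by
    have := congrArg (fun r => Polynomial.coeff r 0) hqf'
    simpa [coeff_C_mul] using this.trans hq
  have hM0 : M.coeff 0 ≠ 0 := fun h0 => by rw [h0, mul_zero] at h1; simp at h1
  have : p.leadingCoeff = q.leadingCoeff := by
    exact mul_right_cancel₀ hM0 (h1.trans h2.symm)
  rw [← hpf, ← hqf', this]

open scoped Classical


/-- the support finset of inverse roots -/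
def Sf [Fintype I] (f : I → Polynomial ℂ) : Finset ℂ :=
  (∏ i, f i).roots.toFinset.image fun r => r⁻¹

section
variable [Fintype I] (σ : Equiv.Perm I) (ι : I₀ → I) (f : I → Polynomial ℂ)

lemma f_ne_zero (hf : ∀ i, (f i).coeff 0 = 1) (i : I) : f i ≠ 0 :=
  fun h0 => by have := hf i; rw [h0] at this; simp at this

lemma Sf_ne_zero (hf : ∀ i, (f i).coeff 0 = 1) {b : ℂ} (hb : b ∈ Sf f) : b ≠ 0 := by
  rcases Finset.mem_image.1 hb with ⟨r, hr, rfl⟩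
  have hr' : r ∈ (∏ i, f i).roots := Multiset.mem_toFinset.1 hr
  have hprod : (∏ i, f i) ≠ 0 :=
    Finset.prod_ne_zero_iff.2 fun i _ => f_ne_zero f hf i
  have hroot : eval r (∏ i, f i) = 0 := (mem_roots hprod).1 hr'
  have hr0 : r ≠ 0 := by
    intro h0
    rw [h0] at hroot
    have h1 : eval 0 (∏ i, f i) = 1 := by
      rw [eval_prod]
      simp [← coeff_zero_eq_eval_zero, hf]
    rw [hroot] at h1
    exact zero_ne_one h1
  exact inv_ne_zero hr0

lemma wt_notmem (hf : ∀ i, (f i).coeff 0 = 1) {b : ℂ} (hb : b ∉ Sf f) (i : I) :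
    wtAt f b i = 0 := by
  by_contra h
  have hfi := f_ne_zero f hf i
  have hpos : 0 < rootMultiplicity b⁻¹ (f i) := Nat.pos_of_ne_zero h
  have hroot : (f i).IsRoot b⁻¹ := (rootMultiplicity_pos hfi).1 hpos
  have hroot' : eval b⁻¹ (f i) = 0 := hroot
  have hb0 : b⁻¹ ≠ 0 := by
    intro h0
    rw [h0, ← coeff_zero_eq_eval_zero, hf i] at hroot'
    exact one_ne_zero hroot'
  have hprod : (∏ i, f i) ≠ 0 := Finset.prod_ne_zero_iff.2 fun i _ => f_ne_zero f hf i
  have hmem : b⁻¹ ∈ (∏ i, f i).roots := by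
    rw [mem_roots hprod]
    show eval b⁻¹ (∏ i, f i) = 0
    rw [eval_prod]
    exact Finset.prod_eq_zero (Finset.mem_univ i) hroot'
  exact hb (Finset.mem_image.2 ⟨b⁻¹, Multiset.mem_toFinset.2 hmem, inv_inv b⟩)

lemma L1 (hf : ∀ i, (f i).coeff 0 = 1) (j : I₀) (x : ℂ) :
    rootMultiplicity x (fold 2 (-1 : ℂ) σ ι f j) = ∑ b ∈ Sf f, ∑ ε ∈ Finset.range 2,
      if x = (((-1 : ℂ)^ε * b)^(if σ (ι j) = ι j then 2 else 1))⁻¹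
      then lamComp σ ι (wtAt f b) ε j else 0 := by
  unfold fold
  rw [rm_prod _ _ (fun b hb => Finset.prod_ne_zero_iff.2 fun ε _ => pow_ne_zero _ (lin_ne_zero _))]
  refine Finset.sum_congr rfl fun b hb => ?_
  rw [rm_prod _ _ (fun ε _ => pow_ne_zero _ (lin_ne_zero _))]
  refine Finset.sum_congr rfl fun ε _ => ?_
  exact rm_lin_pow _ (pow_ne_zero _ (mul_ne_zero (pow_ne_zero _ (by norm_num)) (Sf_ne_zero f hf hb))) _ _

lemma L1a (hf : ∀ i, (f i).coeff 0 = 1) (j : I₀) (hj : ¬ σ (ι j) = ι j) (c : ℂ) :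
    rootMultiplicity c⁻¹ (fold 2 (-1 : ℂ) σ ι f j)
      = wtAt f c (ι j) + wtAt f (-c) (σ (ι j)) := by
  rw [L1 σ ι f hf j]
  have key : ∀ b ∈ Sf f,
      (∑ ε ∈ Finset.range 2,
        if c⁻¹ = (((-1 : ℂ)^ε * b)^(if σ (ι j) = ι j then 2 else 1))⁻¹
        then lamComp σ ι (wtAt f b) ε j else 0)
      = (if b = c then wtAt f b (ι j) else 0)
        + (if b = -c then wtAt f b (σ (ι j)) else 0) := by
    intro b _
    rw [Finset.sum_range_succ, Finset.sum_range_one, if_neg hj]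
    congr 1
    · simp only [pow_zero, one_mul, pow_one, inv_inj, lamComp, hj, and_false, ne_eq,
        not_true_eq_false, false_and, if_false, Equiv.Perm.coe_one, id_eq]
      by_cases hbc : b = c
      · subst hbc; simp
      · rw [if_neg hbc, if_neg (fun h => hbc h.symm)]
    · by_cases hbc : b = -c
      · subst hbc
        rw [if_pos (by norm_num), if_pos rfl]
        simp [lamComp, hj]
      · rw [if_neg ?_, if_neg hbc]
        simp only [pow_one, neg_one_mul, inv_inj]
        intro h
        exact hbc (by rw [h, neg_neg])
  rw [Finset.sum_congr rfl key, Finset.sum_add_distrib,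
    Finset.sum_ite_eq' (Sf f) c (fun b => wtAt f b (ι j)),
    Finset.sum_ite_eq' (Sf f) (-c) (fun b => wtAt f b (σ (ι j)))]
  congr 1
  · by_cases hcS : c ∈ Sf f
    · rw [if_pos hcS]
    · rw [if_neg hcS, wt_notmem f hf hcS]
  · by_cases hcS : -c ∈ Sf f
    · rw [if_pos hcS]
    · rw [if_neg hcS, wt_notmem f hf hcS]

lemma L1b (hf : ∀ i, (f i).coeff 0 = 1) (j : I₀) (hj : σ (ι j) = ι j) (c : ℂ)
    (hc : c ≠ 0) :
    rootMultiplicity ((c^2)⁻¹) (fold 2 (-1 : ℂ) σ ι f j)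
      = wtAt f c (ι j) + wtAt f (-c) (ι j) := by
  have hne : ¬ (c = -c) := by
    intro h
    apply hc
    have h2 : (2 : ℂ) * c = 0 := by rw [two_mul]; exact add_eq_zero_iff_eq_neg.2 h
    rcases mul_eq_zero.1 h2 with h3 | h3
    · exact absurd h3 two_ne_zero
    · exact h3
  rw [L1 σ ι f hf j]
  have key : ∀ b ∈ Sf f,
      (∑ ε ∈ Finset.range 2,
        if (c^2)⁻¹ = (((-1 : ℂ)^ε * b)^(if σ (ι j) = ι j then 2 else 1))⁻¹
        then lamComp σ ι (wtAt f b) ε j else 0)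
      = (if b = c then wtAt f b (ι j) else 0)
        + (if b = -c then wtAt f b (ι j) else 0) := by
    intro b _
    rw [Finset.sum_range_succ, Finset.sum_range_one, if_pos hj]
    have hsq : ∀ ε : ℕ, (((-1 : ℂ)^ε * b)^2) = b^2 := by
      intro ε
      rw [mul_pow, ← pow_mul, mul_comm ε 2, pow_mul]
      norm_num
    have hcond : ∀ ε : ℕ, ((c^2)⁻¹ = (((-1 : ℂ)^ε * b)^2)⁻¹) ↔ (b = c ∨ b = -c) := by
      intro ε
      rw [hsq ε, inv_inj]
      constructor
      · intro h
        have hb : b * b = c * c := by rw [← sq, ← sq, h]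
        exact mul_self_eq_mul_self_iff.1 hb
      · rintro (rfl | rfl) <;> ring
    have h2 : lamComp σ ι (wtAt f b) 1 j = 0 := by
      simp [lamComp, hj]
    have h0 : lamComp σ ι (wtAt f b) 0 j = wtAt f b (ι j) := by
      simp [lamComp]
    rw [h0, h2]
    by_cases h1 : b = c
    · rw [if_pos ((hcond 0).2 (Or.inl h1)), if_pos h1,
        if_neg (fun hb : b = -c => hne (h1.symm.trans hb))]
      simp
    · by_cases h2' : b = -c
      · rw [if_pos ((hcond 0).2 (Or.inr h2')), if_neg h1, if_pos h2']
        simp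
      · rw [if_neg (fun h => ((hcond 0).1 h).elim h1 h2'), if_neg h1, if_neg h2']
        simp
  rw [Finset.sum_congr rfl key, Finset.sum_add_distrib,
    Finset.sum_ite_eq' (Sf f) c (fun b => wtAt f b (ι j)),
    Finset.sum_ite_eq' (Sf f) (-c) (fun b => wtAt f b (ι j))]
  congr 1
  · by_cases hcS : c ∈ Sf f
    · rw [if_pos hcS]
    · rw [if_neg hcS, wt_notmem f hf hcS]
  · by_cases hcS : -c ∈ Sf f
    · rw [if_pos hcS]
    · rw [if_neg hcS, wt_notmem f hf hcS]

lemma rm_zero (p : Polynomial ℂ) (hp : p.coeff 0 = 1) : rootMultiplicity 0 p = 0 := by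
  apply rootMultiplicity_eq_zero
  intro hr
  have : p.eval 0 = 0 := hr
  rw [← coeff_zero_eq_eval_zero, hp] at this
  exact one_ne_zero this

lemma wt_form (a : ℂ) (ha : a ≠ 0) (F : I → Polynomial ℂ) (n m : I → ℕ)
    (hF : ∀ i, F i = (1 - C a * X)^(n i) * (1 - C (-a) * X)^(m i)) (c : ℂ) (i : I) :
    wtAt F c i = (if c = a then n i else 0) + (if c = -a then m i else 0) := by
  show rootMultiplicity c⁻¹ (F i) = _
  rw [hF i, rootMultiplicity_mul
      (mul_ne_zero (pow_ne_zero _ (lin_ne_zero _)) (pow_ne_zero _ (lin_ne_zero _))),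
    rm_lin_pow a ha, rm_lin_pow (-a) (neg_ne_zero.2 ha)]
  congr 1
  · by_cases h : c = a
    · rw [if_pos h, if_pos (by rw [h])]
    · rw [if_neg h, if_neg (fun h' => h (inv_inj.1 h'))]
  · by_cases h : c = -a
    · rw [if_pos h, if_pos (by rw [h])]
    · rw [if_neg h, if_neg (fun h' => h (inv_inj.1 h'))]

lemma coeff0_form (a : ℂ) (n m : ℕ) :
    ((1 - C a * X)^n * (1 - C (-a) * X)^m : Polynomial ℂ).coeff 0 = 1 := by
  rw [coeff_zero_eq_eval_zero]
  simp

lemma coeff0_fold (f : I → Polynomial ℂ) (j : I₀) :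
    (fold 2 (-1 : ℂ) σ ι f j).coeff 0 = 1 := by
  rw [coeff_zero_eq_eval_zero]
  unfold fold
  rw [eval_prod]
  rw [Finset.prod_eq_one]
  intro b _
  rw [eval_prod, Finset.prod_eq_one]
  intro ε _
  rw [eval_pow]
  simp

end

/-- let m = 2 and 𝛑 = 𝛑_{λ,a} 𝛑_{μ,-a} ∈ 𝒫 with λ, μ ∈ P⁺.  Then
𝐫⁻¹(𝐫(𝛑)) = { 𝛑_{λ+η,a} 𝛑_{μ-σ(η),-a} : η ∈ (P⁺ - λ) ∩ (P⁻ + σ(μ)) }. -/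
theorem stmt19 {I I₀ : Type*} [Fintype I]
    (σ : Equiv.Perm I) (hσ : σ * σ = 1)
    (ι : I₀ → I) (hinj : Function.Injective ι)
    (horb : ∀ i : I, ∃ j : I₀, i = ι j ∨ i = σ (ι j))
    (hsep : ∀ j j' : I₀, σ (ι j) = ι j' → ι j = ι j')
    (a : ℂ) (ha : a ≠ 0) (lam mu : I → ℕ) :
    ∀ f : I → Polynomial ℂ, (∀ i, (f i).coeff 0 = 1) →
      (fold 2 (-1 : ℂ) σ ι f = fold 2 (-1 : ℂ) σ ι (piLam lam a * piLam mu (-a)) ↔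
        ∃ η : I → ℤ,
          (∀ i, 0 ≤ (lam i : ℤ) + η i) ∧
          (∀ i, η i ≤ sw σ (fun i' => (mu i' : ℤ)) i) ∧
          f = piLamZ (fun i => (lam i : ℤ) + η i) a *
              piLamZ (fun i => (mu i : ℤ) - sw σ η i) (-a)) := by
  classical
  intro f hf
  have hss : ∀ i, σ (σ i) = i := fun i => by
    have := congrArg (fun τ : Equiv.Perm I => τ i) hσ
    simpa using this
  have hsymm : ∀ i, σ.symm i = σ i := fun i => by
    rw [Equiv.symm_apply_eq, hss]
  have hga : ¬ (a = -a) := by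
    intro h
    apply ha
    have h2 : (2 : ℂ) * a = 0 := by rw [two_mul]; exact add_eq_zero_iff_eq_neg.2 h
    rcases mul_eq_zero.1 h2 with h3 | h3
    · exact absurd h3 two_ne_zero
    · exact h3
  set g := piLam lam a * piLam mu (-a) with hgdef
  have hgF : ∀ i, g i = (1 - C a * X)^(lam i) * (1 - C (-a) * X)^(mu i) := fun i => rfl
  have hgc : ∀ i, (g i).coeff 0 = 1 := fun i => by rw [hgF i]; exact coeff0_form a _ _
  have hwg : ∀ (c : ℂ) i, wtAt g c i
      = (if c = a then lam i else 0) + (if c = -a then mu i else 0) :=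
    fun c i => wt_form a ha g lam mu hgF c i
  have hwga : ∀ i, wtAt g a i = lam i := by
    intro i; rw [hwg a i, if_pos rfl, if_neg hga]; simp
  have hwgna : ∀ i, wtAt g (-a) i = mu i := by
    intro i
    rw [hwg (-a) i, if_neg (fun h => hga h.symm), if_pos rfl]; simp
  constructor
  · intro h
    have hC : ∀ i, wtAt f a i + wtAt f (-a) (σ i) = lam i + mu (σ i) := by
      intro i
      obtain ⟨j, hij⟩ := horb i
      by_cases hfix : σ (ι j) = ι j
      · have hi : i = ι j := by rcases hij with h' | h' <;> simp [h', hfix]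
        have e1 := L1b σ ι f hf j hfix a ha
        have e2 := L1b σ ι g hgc j hfix a ha
        rw [congrFun h j, e2, hwga, hwgna] at e1
        rw [hi, hfix]
        exact e1.symm
      · rcases hij with h' | h'
        · have e1 := L1a σ ι f hf j hfix a
          have e2 := L1a σ ι g hgc j hfix a
          rw [congrFun h j, e2, hwga, hwgna] at e1
          rw [h']
          exact e1.symm
        · have e1 := L1a σ ι f hf j hfix (-a)
          have e2 := L1a σ ι g hgc j hfix (-a)
          rw [neg_neg] at e1 e2
          rw [congrFun h j, e2, hwga, hwgna] at e1
          rw [h', hss (ι j)]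
          omega
    have hZ : ∀ (i : I) (c : ℂ), c ≠ a → c ≠ -a → wtAt f c i = 0 := by
      intro i c hca hcna
      by_cases hc0 : c = 0
      · show rootMultiplicity c⁻¹ (f i) = 0
        rw [hc0, inv_zero]
        exact rm_zero (f i) (hf i)
      obtain ⟨j, hij⟩ := horb i
      have hwgc : ∀ i', wtAt g c i' = 0 := by
        intro i'; rw [hwg c i', if_neg hca, if_neg hcna]
      have hwgnc : ∀ i', wtAt g (-c) i' = 0 := by
        intro i'
        rw [hwg (-c) i', if_neg (fun h' => hcna (neg_eq_iff_eq_neg.1 h')),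
          if_neg (fun h' => hca (neg_injective h'))]
      by_cases hfix : σ (ι j) = ι j
      · have hi : i = ι j := by rcases hij with h' | h' <;> simp [h', hfix]
        have e1 := L1b σ ι f hf j hfix c hc0
        have e2 := L1b σ ι g hgc j hfix c hc0
        rw [congrFun h j, e2, hwgc, hwgnc] at e1
        rw [hi]
        omega
      · rcases hij with h' | h'
        · have e1 := L1a σ ι f hf j hfix c
          have e2 := L1a σ ι g hgc j hfix c
          rw [congrFun h j, e2, hwgc, hwgnc] at e1
          rw [h']
          omega
        · have e1 := L1a σ ι f hf j hfix (-c)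
          have e2 := L1a σ ι g hgc j hfix (-c)
          rw [neg_neg] at e1 e2
          rw [congrFun h j, e2, hwgnc, hwgc] at e1
          rw [h']
          omega
    have hFm : ∀ i, f i = (1 - C a * X)^(wtAt f a i) * (1 - C (-a) * X)^(wtAt f (-a) i) := by
      intro i
      apply eq_of_rm _ _ (hf i) (coeff0_form a _ _)
      intro x
      rw [rootMultiplicity_mul
          (mul_ne_zero (pow_ne_zero _ (lin_ne_zero _)) (pow_ne_zero _ (lin_ne_zero _))),
        rm_lin_pow a ha, rm_lin_pow (-a) (neg_ne_zero.2 ha)]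
      by_cases h1 : x = a⁻¹
      · rw [if_pos h1, if_neg (fun h' => hga (inv_inj.1 (h1.symm.trans h'))), add_zero, h1]
        rfl
      · by_cases h2 : x = (-a)⁻¹
        · rw [if_neg h1, if_pos h2, zero_add, h2]
          rfl
        · rw [if_neg h1, if_neg h2, add_zero]
          by_cases hx0 : x = 0
          · rw [hx0]
            exact rm_zero (f i) (hf i)
          · have hconv : rootMultiplicity x (f i) = wtAt f x⁻¹ i := by
              show _ = rootMultiplicity x⁻¹⁻¹ (f i)
              rw [inv_inv]
            rw [hconv]
            exact hZ i x⁻¹ (fun h' => h1 (by rw [← inv_inv x, h']))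
              (fun h' => h2 (by rw [← inv_inv x, h']))
    refine ⟨fun i => (wtAt f a i : ℤ) - lam i, ?_, ?_, ?_⟩
    · intro i
      show (0 : ℤ) ≤ (lam i : ℤ) + ((wtAt f a i : ℤ) - (lam i : ℤ))
      omega
    · intro i
      show (wtAt f a i : ℤ) - lam i ≤ (mu (σ.symm i) : ℤ)
      rw [hsymm i]
      have := hC i
      omega
    · funext i
      show f i = (1 - C a * X) ^ ((lam i : ℤ) + ((wtAt f a i : ℤ) - (lam i : ℤ))).toNat *
          (1 - C (-a) * X) ^
            ((mu i : ℤ) - ((wtAt f a (σ.symm i) : ℤ) - (lam (σ.symm i) : ℤ))).toNat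
      have e1 : ((lam i : ℤ) + ((wtAt f a i : ℤ) - (lam i : ℤ))).toNat = wtAt f a i := by omega
      have e2 : ((mu i : ℤ) - ((wtAt f a (σ.symm i) : ℤ) - (lam (σ.symm i) : ℤ))).toNat
          = wtAt f (-a) i := by
        have h3 := hC (σ i)
        rw [hss i] at h3
        rw [hsymm i]
        omega
      rw [e1, e2]
      exact hFm i
  · rintro ⟨η, h1, h2, rfl⟩
    have h2' : ∀ i, η i ≤ (mu (σ.symm i) : ℤ) := h2
    have hmnn : ∀ i, (0 : ℤ) ≤ (mu i : ℤ) - η (σ.symm i) := by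
      intro i
      have hx := h2' (σ.symm i)
      have e : σ.symm (σ.symm i) = i := by rw [hsymm, hsymm, hss]
      rw [e] at hx
      omega
    set F := piLamZ (fun i => (lam i : ℤ) + η i) a *
        piLamZ (fun i => (mu i : ℤ) - sw σ η i) (-a) with hFdef
    set nn : I → ℕ := fun i => ((lam i : ℤ) + η i).toNat with hnndef
    set mm : I → ℕ := fun i => ((mu i : ℤ) - η (σ.symm i)).toNat with hmmdef
    have hFform : ∀ i, F i = (1 - C a * X)^(nn i) * (1 - C (-a) * X)^(mm i) := fun i => rfl
    have hFc : ∀ i, (F i).coeff 0 = 1 := fun i => by rw [hFform i]; exact coeff0_form a _ _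
    have hwf : ∀ (c : ℂ) i, wtAt F c i
        = (if c = a then nn i else 0) + (if c = -a then mm i else 0) :=
      fun c i => wt_form a ha F nn mm hFform c i
    have hnn : ∀ i, (nn i : ℤ) = (lam i : ℤ) + η i := fun i => Int.toNat_of_nonneg (h1 i)
    have hmm : ∀ i, (mm i : ℤ) = (mu i : ℤ) - η (σ.symm i) :=
      fun i => Int.toNat_of_nonneg (hmnn i)
    funext j
    apply eq_of_rm _ _ (coeff0_fold σ ι F j) (coeff0_fold σ ι g j)
    intro x
    by_cases hx0 : x = 0
    · rw [hx0, rm_zero _ (coeff0_fold σ ι F j), rm_zero _ (coeff0_fold σ ι g j)]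
    by_cases hfix : σ (ι j) = ι j
    · obtain ⟨c, hc⟩ := IsAlgClosed.exists_pow_nat_eq (k := ℂ) x⁻¹ (n := 2) (by norm_num)
      have hc0 : c ≠ 0 := by
        intro h0
        apply hx0
        rw [h0] at hc
        have hxi : x⁻¹ = 0 := by rw [← hc]; norm_num
        exact inv_eq_zero.1 hxi
      have e1 := L1b σ ι F hFc j hfix c hc0
      have e2 := L1b σ ι g hgc j hfix c hc0
      rw [hc, inv_inv] at e1 e2
      rw [e1, e2, hwf, hwf, hwg, hwg]
      have hmj := hmm (ι j)
      rw [hsymm, hfix] at hmj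
      have hnj := hnn (ι j)
      by_cases hca : c = a
      · have hcna : ¬ (c = -a) := fun h' => hga (hca.symm.trans h')
        have h3 : ¬ (-c = a) := fun h' => hcna (neg_eq_iff_eq_neg.1 h')
        have h4 : -c = -a := by rw [hca]
        rw [if_pos hca, if_neg hcna, if_neg h3, if_pos h4,
          if_pos hca, if_neg hcna, if_neg h3, if_pos h4]
        omega
      · by_cases hcna : c = -a
        · have h3 : -c = a := by rw [hcna, neg_neg]
          have h4 : ¬ (-c = -a) := fun h' => hca (neg_injective h')
          rw [if_neg hca, if_pos hcna, if_pos h3, if_neg h4,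
            if_neg hca, if_pos hcna, if_pos h3, if_neg h4]
          omega
        · have h3 : ¬ (-c = a) := fun h' => hcna (neg_eq_iff_eq_neg.1 h')
          have h4 : ¬ (-c = -a) := fun h' => hca (neg_injective h')
          rw [if_neg hca, if_neg hcna, if_neg h3, if_neg h4,
            if_neg hca, if_neg hcna, if_neg h3, if_neg h4]
    · have e1 := L1a σ ι F hFc j hfix x⁻¹
      have e2 := L1a σ ι g hgc j hfix x⁻¹
      rw [inv_inv] at e1 e2
      rw [e1, e2, hwf, hwf, hwg, hwg]
      set c := x⁻¹ with hcdef
      have hmsj := hmm (σ (ι j))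
      have e : σ.symm (σ (ι j)) = ι j := by rw [hsymm, hss]
      rw [e] at hmsj
      have hmj := hmm (ι j)
      rw [hsymm] at hmj
      have hnj := hnn (ι j)
      have hnsj := hnn (σ (ι j))
      by_cases hca : c = a
      · have hcna : ¬ (c = -a) := fun h' => hga (hca.symm.trans h')
        have h3 : ¬ (-c = a) := fun h' => hcna (neg_eq_iff_eq_neg.1 h')
        have h4 : -c = -a := by rw [hca]
        rw [if_pos hca, if_neg hcna, if_neg h3, if_pos h4,
          if_pos hca, if_neg hcna, if_neg h3, if_pos h4]
        omega
      · by_cases hcna : c = -a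
        · have h3 : -c = a := by rw [hcna, neg_neg]
          have h4 : ¬ (-c = -a) := fun h' => hca (neg_injective h')
          rw [if_neg hca, if_pos hcna, if_pos h3, if_neg h4,
            if_neg hca, if_pos hcna, if_pos h3, if_neg h4]
          omega
        · have h3 : ¬ (-c = a) := fun h' => hcna (neg_eq_iff_eq_neg.1 h')
          have h4 : ¬ (-c = -a) := fun h' => hca (neg_injective h')
          rw [if_neg hca, if_neg hcna, if_neg h3, if_neg h4,
            if_neg hca, if_neg hcna, if_neg h3, if_neg h4]

end
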